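/- Let G = (V,E) be a d-regular finite graph with N = |V| vertices, and let t₁ be the smallest eigenvalue of its normalized adjacency matrix (1/d)A. Then 1 + t₁ ≥ (√(1 + β_out) − 1)²/(2d), where β_out is the outer vertex bipartiteness constant of G. -/

import Mathlib

attribute [local instance] Classical.propDecidable

/-- The outer vertex boundary of a finite set `U`: vertices outside `U` with a neighbor in `U`. -/
noncomputable def outBd {V : Type*} [Fintype V] (Adj : V → V → Prop) (U : Finset V) : Finset V :=
  Finset.univ.filter fun y => y ∉ U ∧ ∃ x ∈ U, Adj x y

/-- `I(L)` is the number of vertices of `L` having a neighbor in `L`. -/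
noncomputable def II {V : Type*} (Adj : V → V → Prop) (L : Finset V) : ℕ :=
  (L.filter fun x => ∃ y ∈ L, Adj x y).card

/-- The outer vertex bipartiteness constant `β_out`. -/
noncomputable def betaOut {V : Type*} [Fintype V] (Adj : V → V → Prop) : ℝ :=
  sInf {r : ℝ | ∃ L R : Finset V, Disjoint L R ∧ (L ∪ R).Nonempty ∧
    r = ((II Adj L : ℝ) + (II Adj R : ℝ) + ((outBd Adj (L ∪ R)).card : ℝ)) /
      ((L ∪ R).card : ℝ)}

open Finset

private lemma pair_sum_le {V : Type*} {s : Finset V} (g : V → ℝ) (hg : ∀ y ∈ s, 0 ≤ g y)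
    {y1 y0 : V} (h1 : y1 ∈ s) (h0 : y0 ∈ s) (hne : y1 ≠ y0) :
    g y1 + g y0 ≤ ∑ y ∈ s, g y := by
  classical
  have hsub : ({y1, y0} : Finset V) ⊆ s := by
    intro z hz
    simp only [Finset.mem_insert, Finset.mem_singleton] at hz
    rcases hz with h | h <;> subst h <;> assumption
  calc g y1 + g y0 = ∑ y ∈ ({y1, y0} : Finset V), g y := (Finset.sum_pair hne).symm
    _ ≤ ∑ y ∈ s, g y := Finset.sum_le_sum_of_subset_of_nonneg hsub (fun y hy _ => hg y hy)

private lemma core_e {V : Type*} {s : Finset V} (hs : s.Nonempty) (g : V → ℝ) (a : ℝ) :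
    (max ((s.sup' hs fun y => |g y|) - |a|) 0) ^ 2 ≤ ∑ y ∈ s, (a + g y) ^ 2 := by
  obtain ⟨y0, hy0, hM⟩ := Finset.exists_mem_eq_sup' hs (fun y => |g y|)
  have h1 : max ((s.sup' hs fun y => |g y|) - |a|) 0 ≤ |a + g y0| := by
    rw [hM]
    rcases le_total (|g y0|) (|a|) with h | h
    · have : max (|g y0| - |a|) 0 = 0 := max_eq_right (by linarith)
      rw [this]; positivity
    · have : |g y0| - |a| ≤ |a + g y0| := by
        have h2 := abs_add_le (a + g y0) (-a)
        have he : a + g y0 + -a = g y0 := by ring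
        rw [he, abs_neg] at h2
        linarith
      exact max_le (this) (abs_nonneg _)
  have h2 : (max ((s.sup' hs fun y => |g y|) - |a|) 0) ^ 2 ≤ (a + g y0) ^ 2 := by
    rw [← sq_abs (a + g y0)]
    exact pow_le_pow_left₀ (le_max_right _ 0) h1 2
  exact h2.trans (Finset.single_le_sum (f := fun y => (a + g y)^2) (fun y _ => by positivity) hy0)

private lemma core_aux {V : Type*} {s : Finset V} (hs : s.Nonempty) (g : V → ℝ) (a : ℝ)
    (ha : 0 ≤ a) :
    (max (min (-a) (s.sup' hs fun y => -g y)) 0) ^ 2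
      + (max (min a (s.sup' hs g)) 0) ^ 2
      + max ((s.sup' hs fun y => |g y|) ^ 2 - a ^ 2) 0
    ≤ (∑ y ∈ s, (a + g y) ^ 2)
      + 2 * |a| * max ((s.sup' hs fun y => |g y|) - |a|) 0 := by
  set P := s.sup' hs g with hPdef
  set M := s.sup' hs (fun y => |g y|) with hMdef
  obtain ⟨y0, hy0, hM⟩ := Finset.exists_mem_eq_sup' hs (fun y => |g y|)
  rw [← hMdef] at hM
  have hM0 : 0 ≤ M := hM ▸ abs_nonneg _
  have hA : max (min (-a) (s.sup' hs fun y => -g y)) 0 = 0 :=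
    max_eq_right ((min_le_left _ _).trans (by linarith))
  have haa : |a| = a := abs_of_nonneg ha
  have hsum0 : (a + g y0)^2 ≤ ∑ y ∈ s, (a + g y)^2 :=
    Finset.single_le_sum (f := fun y => (a + g y)^2) (fun y _ => by positivity) hy0
  have hemax : (0:ℝ) ≤ 2 * |a| * max (M - |a|) 0 := by positivity
  rcases lt_or_ge 0 (g y0) with hg0 | hg0
  · -- M = g y0 = P case: B + C ≤ M^2 ≤ (a + g y0)^2
    have hMg : M = g y0 := by rw [hM, abs_of_pos hg0]
    have hBM : max (min a P) 0 ≤ M := by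
      apply max_le _ hM0
      refine (min_le_right _ _).trans ?_
      rw [hPdef, hMdef]
      exact Finset.sup'_le hs g fun y hy => (le_abs_self (g y)).trans (Finset.le_sup' (fun y => |g y|) hy)
    have hBa : max (min a P) 0 ≤ a := max_le (min_le_left _ _) ha
    have hB0 : 0 ≤ max (min a P) 0 := le_max_right _ _
    have hC : max (M^2 - a^2) 0 ≤ max (M^2 - a^2) 0 := le_refl _
    have key : (max (min a P) 0)^2 + max (M^2 - a^2) 0 ≤ M^2 := by
      rcases le_total (M^2 - a^2) 0 with h | h
      · rw [max_eq_right h]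
        nlinarith
      · rw [max_eq_left h]
        nlinarith
    have hMsq : M^2 ≤ (a + g y0)^2 := by nlinarith
    rw [hA]
    nlinarith
  · -- g y0 ≤ 0, M = -g y0
    have hMg : M = -(g y0) := by rw [hM, abs_of_nonpos hg0]
    have hCe : max (M^2 - a^2) 0 ≤ (a + g y0)^2 + 2 * |a| * max (M - |a|) 0 := by
      rw [haa]
      rcases le_total M a with h | h
      · have h1 : max (M^2 - a^2) 0 = 0 := max_eq_right (by nlinarith)
        rw [h1]; positivity
      · have h1 : max (M^2 - a^2) 0 = M^2 - a^2 := max_eq_left (by nlinarith)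
        have h2 : max (M - a) 0 = M - a := max_eq_left (by linarith)
        have h3 : (a + g y0)^2 = (M - a)^2 := by rw [hMg]; ring
        rw [h1, h2, h3]; ring_nf; nlinarith
    rcases le_or_gt (min a P) 0 with hB0 | hB0
    · have hB : max (min a P) 0 = 0 := max_eq_right hB0
      rw [hA, hB]
      nlinarith
    · have haP : 0 < a := lt_of_lt_of_le hB0 (min_le_left _ _)
      have hP0 : 0 < P := lt_of_lt_of_le hB0 (min_le_right _ _)
      obtain ⟨y1, hy1, hP⟩ := Finset.exists_mem_eq_sup' hs g
      rw [← hPdef] at hP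
      have hne : y1 ≠ y0 := by
        intro h
        rw [h] at hP
        rw [hP] at hP0
        linarith
      have hBb : (max (min a P) 0)^2 ≤ (a + g y1)^2 := by
        have hmx : max (min a P) 0 = min a P := max_eq_left hB0.le
        rw [hmx, ← hP]
        have h1 : min a P ≤ a := min_le_left _ _
        have h2 : min a P ≤ P := min_le_right _ _
        nlinarith
      have hpairs : (a + g y1)^2 + (a + g y0)^2 ≤ ∑ y ∈ s, (a + g y)^2 :=
        pair_sum_le (fun y => (a + g y)^2) (fun y _ => by positivity) hy1 hy0 hne
      rw [hA]
      nlinarith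

private lemma core {V : Type*} {s : Finset V} (hs : s.Nonempty) (g : V → ℝ) (a : ℝ) :
    (max (min (-a) (s.sup' hs fun y => -g y)) 0) ^ 2
      + (max (min a (s.sup' hs g)) 0) ^ 2
      + max ((s.sup' hs fun y => |g y|) ^ 2 - a ^ 2) 0
    ≤ (∑ y ∈ s, (a + g y) ^ 2)
      + 2 * |a| * max ((s.sup' hs fun y => |g y|) - |a|) 0 := by
  rcases le_or_gt 0 a with ha | ha
  · exact core_aux hs g a ha
  · have := core_aux hs (fun y => -g y) (-a) (by linarith)
    simp only [neg_neg, abs_neg, neg_sq] at this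
    have e2 : ∀ y, (-a + -g y)^2 = (a + g y)^2 := fun y => by ring
    simp only [e2] at this
    linarith [this]

private lemma vrep (T : Finset ℝ) (hT : ∀ θ ∈ T, 0 < θ) :
    ∃ (n : ℕ) (v : ℕ → ℝ), v 0 = 0 ∧ (∀ i j, i < j → j ≤ n → v i < v j) ∧
      (∀ θ, θ ∈ T ↔ ∃ i, 1 ≤ i ∧ i ≤ n ∧ v i = θ) := by
  classical
  set l := T.sort (· ≤ ·) with hl
  have hsort : l.Pairwise (· < ·) := List.sortedLT_iff_pairwise.1 T.sortedLT_sort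
  have hmem : ∀ θ, θ ∈ l ↔ θ ∈ T := fun θ => Finset.mem_sort _
  refine ⟨l.length, fun i => if i = 0 then 0 else l.getD (i-1) 0, by simp, ?_, ?_⟩
  · intro i j hij hj
    have hjl : j - 1 < l.length := by omega
    have hgetj : l.getD (j-1) 0 = l.get ⟨j-1, hjl⟩ := List.getD_eq_get l 0 ⟨j-1, hjl⟩
    have hj0 : j ≠ 0 := by omega
    rcases Nat.eq_zero_or_pos i with hi0 | hi0
    · simp only [hi0, if_pos rfl, if_neg hj0]
      rw [hgetj]
      exact hT _ ((hmem _).1 (l.get_mem _))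
    · have hi0' : i ≠ 0 := by omega
      simp only [if_neg hi0', if_neg hj0]
      have hil : i - 1 < l.length := by omega
      rw [hgetj, List.getD_eq_get l 0 ⟨i-1, hil⟩]
      exact List.pairwise_iff_get.1 hsort ⟨i-1, hil⟩ ⟨j-1, hjl⟩ (by simp; omega)
  · intro θ
    rw [← hmem]
    constructor
    · intro h
      obtain ⟨⟨k, hk⟩, hget⟩ := List.mem_iff_get.1 h
      refine ⟨k+1, by omega, by omega, ?_⟩
      simp only [Nat.add_sub_cancel, if_neg (Nat.succ_ne_zero k)]
      rw [List.getD_eq_get l 0 ⟨k, hk⟩]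
      exact hget
    · rintro ⟨i, hi1, hin, hv⟩
      have hi0 : i ≠ 0 := by omega
      simp only [if_neg hi0] at hv
      have hil : i - 1 < l.length := by omega
      rw [List.getD_eq_get l 0 ⟨i-1, hil⟩] at hv
      rw [← hv]
      exact l.get_mem _


private lemma vmono_le {n : ℕ} {v : ℕ → ℝ}
    (hmono : ∀ i j, i < j → j ≤ n → v i < v j)
    {i j : ℕ} (hij : i ≤ j) (hj : j ≤ n) : v i ≤ v j := by
  rcases Nat.eq_or_lt_of_le hij with h | h
  · rw [h]
  · exact (hmono i j h hj).le

private lemma filt_Ico {n : ℕ} {v : ℕ → ℝ}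
    (hmono : ∀ i j, i < j → j ≤ n → v i < v j)
    {j k : ℕ} (hjk : j ≤ k) (hk : k ≤ n) :
    (range n).filter (fun i => v j < v (i+1) ∧ v (i+1) ≤ v k) = Finset.Ico j k := by
  ext i
  simp only [Finset.mem_filter, Finset.mem_range, Finset.mem_Ico]
  constructor
  · rintro ⟨hin, h1, h2⟩
    constructor
    · by_contra h
      push_neg at h
      have : v (i+1) ≤ v j := vmono_le hmono (by omega) (le_trans hjk hk)
      linarith
    · by_contra h
      push_neg at h
      have : v k < v (i+1) := hmono k (i+1) (by omega) (by omega)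
      linarith
  · rintro ⟨hji, hik⟩
    exact ⟨by omega, hmono j (i+1) (by omega) (by omega), vmono_le hmono (by omega) hk⟩

private lemma sum_w_between {n : ℕ} {v : ℕ → ℝ} (h0 : v 0 = 0)
    (hmono : ∀ i j, i < j → j ≤ n → v i < v j)
    {a b : ℝ} (ha : ∃ j, j ≤ n ∧ v j = a) (hb : ∃ k, k ≤ n ∧ v k = b) :
    ∑ i ∈ (range n).filter (fun i => a < v (i+1) ∧ v (i+1) ≤ b),
      (v (i+1)^2 - v i^2) = max (b^2 - a^2) 0 := by
  obtain ⟨j, hj, rfl⟩ := ha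
  obtain ⟨k, hk, rfl⟩ := hb
  have h0a : 0 ≤ v j := h0 ▸ vmono_le hmono (Nat.zero_le j) hj
  have h0b : 0 ≤ v k := h0 ▸ vmono_le hmono (Nat.zero_le k) hk
  rcases le_or_gt j k with hjk | hkj
  · rw [filt_Ico hmono hjk hk]
    rw [Finset.sum_Ico_eq_sub _ hjk, Finset.sum_range_sub (fun i => v i ^ 2),
      Finset.sum_range_sub (fun i => v i ^ 2)]
    have : v j ≤ v k := vmono_le hmono hjk hk
    rw [max_eq_left (by nlinarith)]
    rw [h0]
    ring
  · have hvkj : v k < v j := hmono k j hkj hj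
    have hempty : (range n).filter (fun i => v j < v (i+1) ∧ v (i+1) ≤ v k) = ∅ := by
      apply Finset.filter_false_of_mem
      rintro i _ ⟨h1, h2⟩
      linarith
    rw [hempty, Finset.sum_empty, max_eq_right (by nlinarith)]

private lemma sum_w_le {n : ℕ} {v : ℕ → ℝ} (h0 : v 0 = 0)
    (hmono : ∀ i j, i < j → j ≤ n → v i < v j)
    {c : ℝ} (hc : c < 0 ∨ ∃ k, k ≤ n ∧ v k = c) :
    ∑ i ∈ (range n).filter (fun i => v (i+1) ≤ c),
      (v (i+1)^2 - v i^2) = (max c 0)^2 := by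
  rcases hc with hc | ⟨k, hk, rfl⟩
  · have hempty : (range n).filter (fun i => v (i+1) ≤ c) = ∅ := by
      apply Finset.filter_false_of_mem
      intro i hi
      simp only [Finset.mem_range] at hi
      have h1 : v 0 < v (i+1) := hmono 0 (i+1) (by omega) (by omega)
      rw [h0] at h1
      intro h
      linarith
    rw [hempty, Finset.sum_empty, max_eq_right hc.le]
    ring
  · have h0c : 0 ≤ v k := h0 ▸ vmono_le hmono (Nat.zero_le k) hk
    have heq : (range n).filter (fun i => v (i+1) ≤ v k)
        = (range n).filter (fun i => v 0 < v (i+1) ∧ v (i+1) ≤ v k) := by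
      apply Finset.filter_congr
      intro i hi
      simp only [Finset.mem_range] at hi
      have h1 := hmono 0 (i+1) (by omega) (by omega)
      exact ⟨fun h => ⟨h1, h⟩, fun h => h.2⟩
    rw [heq, sum_w_between h0 hmono ⟨0, Nat.zero_le n, rfl⟩ ⟨k, hk, rfl⟩, h0,
      max_eq_left h0c, max_eq_left (by nlinarith)]
    ring

private lemma swap_sum {V : Type*} [Fintype V] {n : ℕ} (v : ℕ → ℝ) (p : ℕ → V → Prop)
    [∀ i x, Decidable (p i x)] :
    ∑ i ∈ range n, (v (i+1)^2 - v i^2) * (((univ.filter fun x => p i x)).card : ℝ)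
      = ∑ x, ∑ i ∈ (range n).filter (fun i => p i x), (v (i+1)^2 - v i^2) := by
  classical
  have h1 : ∀ i, (((univ.filter fun x => p i x)).card : ℝ)
      = ∑ x, if p i x then (1:ℝ) else 0 := fun i => by
    rw [Finset.sum_boole]
  calc ∑ i ∈ range n, (v (i+1)^2 - v i^2) * (((univ.filter fun x => p i x)).card : ℝ)
      = ∑ i ∈ range n, ∑ x, (if p i x then (v (i+1)^2 - v i^2) else 0) := by
        apply Finset.sum_congr rfl
        intro i _
        rw [h1 i, Finset.mul_sum]
        apply Finset.sum_congr rfl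
        intro x _
        split <;> simp
    _ = ∑ x, ∑ i ∈ range n, (if p i x then (v (i+1)^2 - v i^2) else 0) := Finset.sum_comm
    _ = ∑ x, ∑ i ∈ (range n).filter (fun i => p i x), (v (i+1)^2 - v i^2) := by
        apply Finset.sum_congr rfl
        intro x _
        rw [Finset.sum_filter]

set_option maxHeartbeats 1000000 in
private lemma beta_le {V : Type*} [Fintype V] [Nonempty V] (Adj : V → V → Prop)
    (hsymm : ∀ x y : V, Adj x y → Adj y x) (d : ℕ) (hd : 1 ≤ d)
    (hreg : ∀ x : V, (Finset.univ.filter fun y => Adj x y).card = d)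
    (r : ℝ) (f : V → ℝ) (hf0 : f ≠ 0)
    (hf : ((d : ℝ)⁻¹ • Matrix.of fun x y : V => if Adj x y then (1 : ℝ) else 0).mulVec f
        = r • f) :
    0 ≤ 1 + r ∧
      betaOut Adj ≤ 2*(d:ℝ)*(1+r) + 2*Real.sqrt (2*(d:ℝ)*(1+r)) := by
  classical
  have hdR : (0:ℝ) < (d:ℝ) := by exact_mod_cast Nat.lt_of_lt_of_le Nat.zero_lt_one hd
  set nbr : V → Finset V := fun x => univ.filter (fun y => Adj x y) with hnbr_def
  have hnbr : ∀ x, (nbr x).Nonempty := by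
    intro x
    apply Finset.card_pos.1
    rw [hnbr_def]
    simp only
    rw [hreg x]
    omega
  -- row sums
  have Srow : ∀ x, ∑ y ∈ nbr x, f y = (d:ℝ) * r * f x := by
    intro x
    have h := congrFun hf x
    simp only [Matrix.mulVec, dotProduct, Matrix.smul_apply, Matrix.of_apply,
      Pi.smul_apply, smul_eq_mul, mul_ite, ite_mul, mul_one, mul_zero, zero_mul] at h
    rw [← Finset.sum_filter] at h
    have h2 : ∀ y ∈ univ.filter (fun y => Adj x y), (d:ℝ)⁻¹ * f y = (d:ℝ)⁻¹ * f y := fun _ _ => rfl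
    rw [← Finset.mul_sum] at h
    have : ∑ y ∈ univ.filter (fun y => Adj x y), f y = (d:ℝ) * (r * f x) := by
      rw [← h, ← mul_assoc, mul_inv_cancel₀ (ne_of_gt hdR), one_mul]
    rw [hnbr_def]
    simp only
    rw [this]
    ring
  set S := ∑ x, f x ^ 2 with hSdef
  obtain ⟨x0, hx0⟩ : ∃ x, f x ≠ 0 := by
    by_contra h
    push_neg at h
    exact hf0 (funext h)
  have hS : 0 < S := Finset.sum_pos' (fun x _ => sq_nonneg _) ⟨x0, Finset.mem_univ _, by positivity⟩
  set Q := ∑ x, ∑ y ∈ nbr x, (f x + f y)^2 with hQdef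
  have hcount : ∀ x, ((nbr x).card : ℝ) = (d:ℝ) := by
    intro x
    rw [hnbr_def]
    simp only
    rw [hreg x]
  have hswapnbr : ∑ x, ∑ y ∈ nbr x, f y ^ 2 = (d:ℝ) * S := by
    calc ∑ x, ∑ y ∈ nbr x, f y ^ 2
        = ∑ x, ∑ y, (if Adj x y then f y ^ 2 else 0) := by
          apply Finset.sum_congr rfl
          intro x _
          rw [hnbr_def]
          simp only
          rw [Finset.sum_filter]
      _ = ∑ y, ∑ x, (if Adj x y then f y ^ 2 else 0) := Finset.sum_comm
      _ = ∑ y, (d:ℝ) * f y ^ 2 := by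
          apply Finset.sum_congr rfl
          intro y _
          rw [← Finset.sum_filter]
          rw [Finset.sum_const]
          have : (univ.filter fun x => Adj x y) = (univ.filter fun x => Adj y x) := by
            ext z
            simp only [Finset.mem_filter, Finset.mem_univ, true_and]
            exact ⟨fun h => hsymm z y h, fun h => hsymm y z h⟩
          rw [this, hreg y, nsmul_eq_mul]
      _ = (d:ℝ) * S := by rw [← Finset.mul_sum]
  have hQ : Q = 2*(d:ℝ)*(1+r)*S := by
    rw [hQdef]
    have expand : ∀ x, ∑ y ∈ nbr x, (f x + f y)^2
        = (d:ℝ) * f x ^ 2 + 2 * (f x * ((d:ℝ) * r * f x)) + ∑ y ∈ nbr x, f y ^ 2 := by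
      intro x
      have e1 : ∑ y ∈ nbr x, (f x + f y)^2
          = ∑ y ∈ nbr x, (f x ^ 2 + 2 * (f x * f y) + f y ^ 2) := by
        apply Finset.sum_congr rfl
        intros
        ring
      rw [e1, Finset.sum_add_distrib, Finset.sum_add_distrib, Finset.sum_const, ← Finset.mul_sum,
        ← Finset.mul_sum, Srow x, nsmul_eq_mul]
      rw [show ((nbr x).card : ℝ) * f x ^2 = ((nbr x).card : ℝ) * f x ^2 from rfl]
      rw [hcount x]
    rw [Finset.sum_congr rfl (fun x _ => expand x), Finset.sum_add_distrib,
      Finset.sum_add_distrib, hswapnbr, ← Finset.mul_sum, ← Finset.mul_sum, ← hSdef]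
    have : ∑ x, f x * ((d:ℝ) * r * f x) = (d:ℝ) * r * S := by
      rw [hSdef, Finset.mul_sum]
      apply Finset.sum_congr rfl
      intros
      ring
    rw [this]
    ring
  have hQ0 : 0 ≤ Q := Finset.sum_nonneg fun x _ => Finset.sum_nonneg fun y _ => sq_nonneg _
  have hlam : 0 ≤ 1 + r := by nlinarith [mul_pos hdR hS]
  refine ⟨hlam, ?_⟩
  set K := 2*(d:ℝ)*(1+r) + 2*Real.sqrt (2*(d:ℝ)*(1+r)) with hKdef
  -- thresholds
  set T : Finset ℝ := (Finset.univ.image fun x => |f x|).filter (fun θ => 0 < θ) with hTdef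
  obtain ⟨n, v, hv0, hmono, hrep⟩ := vrep T (fun θ hθ => (Finset.mem_filter.1 hθ).2)
  have habs : ∀ x : V, ∃ k, k ≤ n ∧ v k = |f x| := by
    intro x
    rcases eq_or_ne (f x) 0 with h | h
    · exact ⟨0, Nat.zero_le n, by rw [hv0, h, abs_zero]⟩
    · have hmemT : |f x| ∈ T := by
        rw [hTdef]
        exact Finset.mem_filter.2 ⟨Finset.mem_image_of_mem _ (Finset.mem_univ x), abs_pos.2 h⟩
      obtain ⟨i, h1, h2, h3⟩ := (hrep _).1 hmemT
      exact ⟨i, h2, h3⟩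
  have hn : 1 ≤ n := by
    have hmemT : |f x0| ∈ T := by
      rw [hTdef]
      exact Finset.mem_filter.2 ⟨Finset.mem_image_of_mem _ (Finset.mem_univ x0), abs_pos.2 hx0⟩
    obtain ⟨i, h1, h2, _⟩ := (hrep _).1 hmemT
    omega
  set Lset : ℕ → Finset V := fun i => univ.filter (fun x => f x ≤ -(v (i+1))) with hLdef
  set Rset : ℕ → Finset V := fun i => univ.filter (fun x => v (i+1) ≤ f x) with hRdef
  have hUfilt : ∀ i, Lset i ∪ Rset i = univ.filter (fun x => v (i+1) ≤ |f x|) := by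
    intro i
    ext x
    simp only [hLdef, hRdef, Finset.mem_union, Finset.mem_filter, Finset.mem_univ, true_and]
    rw [le_abs]
    constructor
    · rintro (h | h)
      · right; linarith
      · left; exact h
    · rintro (h | h)
      · right; exact h
      · left; linarith
  set Ng : V → ℝ := fun x => (nbr x).sup' (hnbr x) (fun y => -f y) with hNgdef
  set Pp : V → ℝ := fun x => (nbr x).sup' (hnbr x) f with hPpdef
  set Mm : V → ℝ := fun x => (nbr x).sup' (hnbr x) (fun y => |f y|) with hMmdef
    -- membership characterizations
  have hLmem : ∀ i x, ((x ∈ Lset i ∧ ∃ y ∈ Lset i, Adj x y)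
      ↔ v (i+1) ≤ min (-f x) (Ng x)) := by
    intro i x
    simp only [hLdef, Finset.mem_filter, Finset.mem_univ, true_and, le_min_iff]
    constructor
    · rintro ⟨h1, y, hy, hxy⟩
      refine ⟨by linarith, ?_⟩
      rw [hNgdef]
      simp only
      rw [Finset.le_sup'_iff]
      have hymem : y ∈ nbr x := by
        rw [hnbr_def]
        exact Finset.mem_filter.2 ⟨Finset.mem_univ _, hxy⟩
      exact ⟨y, hymem, by linarith⟩
    · rintro ⟨h1, h2⟩
      rw [hNgdef] at h2
      simp only at h2
      rw [Finset.le_sup'_iff] at h2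
      obtain ⟨y, hy, h3⟩ := h2
      rw [hnbr_def] at hy
      simp only [Finset.mem_filter, Finset.mem_univ, true_and] at hy
      exact ⟨by linarith, y, by linarith, hy⟩
  have hRmem : ∀ i x, ((x ∈ Rset i ∧ ∃ y ∈ Rset i, Adj x y)
      ↔ v (i+1) ≤ min (f x) (Pp x)) := by
    intro i x
    simp only [hRdef, Finset.mem_filter, Finset.mem_univ, true_and, le_min_iff]
    constructor
    · rintro ⟨h1, y, hy, hxy⟩
      refine ⟨h1, ?_⟩
      rw [hPpdef]
      simp only
      rw [Finset.le_sup'_iff]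
      have hymem : y ∈ nbr x := by
        rw [hnbr_def]
        exact Finset.mem_filter.2 ⟨Finset.mem_univ _, hxy⟩
      exact ⟨y, hymem, hy⟩
    · rintro ⟨h1, h2⟩
      rw [hPpdef] at h2
      simp only at h2
      rw [Finset.le_sup'_iff] at h2
      obtain ⟨y, hy, h3⟩ := h2
      rw [hnbr_def] at hy
      simp only [Finset.mem_filter, Finset.mem_univ, true_and] at hy
      exact ⟨h1, y, h3, hy⟩
  have hBmem : ∀ i x, (x ∈ outBd Adj (Lset i ∪ Rset i)
      ↔ (|f x| < v (i+1) ∧ v (i+1) ≤ Mm x)) := by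
    intro i x
    rw [outBd, Finset.mem_filter]
    simp only [Finset.mem_univ, true_and]
    rw [hUfilt i]
    simp only [Finset.mem_filter, Finset.mem_univ, true_and, not_le]
    constructor
    · rintro ⟨h1, z, hz, hzx⟩
      refine ⟨h1, ?_⟩
      rw [hMmdef]
      simp only
      rw [Finset.le_sup'_iff]
      have hzmem : z ∈ nbr x := by
        rw [hnbr_def]
        exact Finset.mem_filter.2 ⟨Finset.mem_univ _, hsymm z x hzx⟩
      exact ⟨z, hzmem, hz⟩
    · rintro ⟨h1, h2⟩
      rw [hMmdef] at h2
      simp only at h2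
      rw [Finset.le_sup'_iff] at h2
      obtain ⟨z, hz, h3⟩ := h2
      rw [hnbr_def] at hz
      simp only [Finset.mem_filter, Finset.mem_univ, true_and] at hz
      exact ⟨h1, z, h3, hsymm x z hz⟩
  -- value-set membership side conditions
  have hvMm : ∀ x, ∃ k, k ≤ n ∧ v k = Mm x := by
    intro x
    obtain ⟨y0, hy0, hMeq⟩ := Finset.exists_mem_eq_sup' (hnbr x) (fun y => |f y|)
    have : Mm x = |f y0| := by rw [hMmdef]; simp only; exact hMeq
    obtain ⟨k, hk, he⟩ := habs y0
    exact ⟨k, hk, by rw [he, this]⟩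
  have hcL : ∀ x, min (-f x) (Ng x) < 0 ∨ ∃ k, k ≤ n ∧ v k = min (-f x) (Ng x) := by
    intro x
    rcases lt_or_ge (min (-f x) (Ng x)) 0 with h | h
    · exact Or.inl h
    · right
      obtain ⟨h1, h2⟩ := le_min_iff.1 h
      have hv1 : ∃ k, k ≤ n ∧ v k = -f x := by
        obtain ⟨k, hk, he⟩ := habs x
        exact ⟨k, hk, by rw [he, abs_of_nonpos (by linarith)]⟩
      have hv2 : ∃ k, k ≤ n ∧ v k = Ng x := by
        obtain ⟨y0, hy0, hNeq⟩ := Finset.exists_mem_eq_sup' (hnbr x) (fun y => -f y)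
        have hNx : Ng x = -f y0 := by rw [hNgdef]; simp only; exact hNeq
        obtain ⟨k, hk, he⟩ := habs y0
        exact ⟨k, hk, by rw [he, abs_of_nonpos (by rw [hNx] at h2; linarith), hNx]⟩
      rcases le_total (-f x) (Ng x) with hm | hm
      · rw [min_eq_left hm]; exact hv1
      · rw [min_eq_right hm]; exact hv2
  have hcR : ∀ x, min (f x) (Pp x) < 0 ∨ ∃ k, k ≤ n ∧ v k = min (f x) (Pp x) := by
    intro x
    rcases lt_or_ge (min (f x) (Pp x)) 0 with h | h
    · exact Or.inl h
    · right
      obtain ⟨h1, h2⟩ := le_min_iff.1 h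
      have hv1 : ∃ k, k ≤ n ∧ v k = f x := by
        obtain ⟨k, hk, he⟩ := habs x
        exact ⟨k, hk, by rw [he, abs_of_nonneg h1]⟩
      have hv2 : ∃ k, k ≤ n ∧ v k = Pp x := by
        obtain ⟨y0, hy0, hPeq⟩ := Finset.exists_mem_eq_sup' (hnbr x) f
        have hPx : Pp x = f y0 := by rw [hPpdef]; simp only; exact hPeq
        obtain ⟨k, hk, he⟩ := habs y0
        exact ⟨k, hk, by rw [he, abs_of_nonneg (by rw [hPx] at h2; linarith), hPx]⟩
      rcases le_total (f x) (Pp x) with hm | hm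
      · rw [min_eq_left hm]; exact hv1
      · rw [min_eq_right hm]; exact hv2
  -- the three weighted sums
  have hLsum : ∑ i ∈ range n, (v (i+1)^2 - v i^2) * (II Adj (Lset i) : ℝ)
      = ∑ x, (max (min (-f x) (Ng x)) 0)^2 := by
    have hIIeq : ∀ i, (II Adj (Lset i) : ℝ)
        = ((univ.filter fun x => v (i+1) ≤ min (-f x) (Ng x)).card : ℝ) := by
      intro i
      rw [II]
      congr 2
      ext x
      rw [Finset.mem_filter]
      constructor
      · rintro ⟨h1, h2⟩
        exact Finset.mem_filter.2 ⟨Finset.mem_univ _, (hLmem i x).1 ⟨h1, h2⟩⟩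
      · intro h
        have := (hLmem i x).2 (Finset.mem_filter.1 h).2
        exact ⟨this.1, this.2⟩
    rw [Finset.sum_congr rfl (fun i _ => by rw [hIIeq i]), swap_sum]
    apply Finset.sum_congr rfl
    intro x _
    rw [sum_w_le hv0 hmono (hcL x)]
  have hRsum : ∑ i ∈ range n, (v (i+1)^2 - v i^2) * (II Adj (Rset i) : ℝ)
      = ∑ x, (max (min (f x) (Pp x)) 0)^2 := by
    have hIIeq : ∀ i, (II Adj (Rset i) : ℝ)
        = ((univ.filter fun x => v (i+1) ≤ min (f x) (Pp x)).card : ℝ) := by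
      intro i
      rw [II]
      congr 2
      ext x
      rw [Finset.mem_filter]
      constructor
      · rintro ⟨h1, h2⟩
        exact Finset.mem_filter.2 ⟨Finset.mem_univ _, (hRmem i x).1 ⟨h1, h2⟩⟩
      · intro h
        have := (hRmem i x).2 (Finset.mem_filter.1 h).2
        exact ⟨this.1, this.2⟩
    rw [Finset.sum_congr rfl (fun i _ => by rw [hIIeq i]), swap_sum]
    apply Finset.sum_congr rfl
    intro x _
    rw [sum_w_le hv0 hmono (hcR x)]
  have hBsum : ∑ i ∈ range n, (v (i+1)^2 - v i^2) * (((outBd Adj (Lset i ∪ Rset i)).card : ℝ))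
      = ∑ x, max ((Mm x)^2 - (f x)^2) 0 := by
    have hOeq : ∀ i, ((outBd Adj (Lset i ∪ Rset i)).card : ℝ)
        = ((univ.filter fun x => |f x| < v (i+1) ∧ v (i+1) ≤ Mm x).card : ℝ) := by
      intro i
      congr 2
      ext x
      rw [hBmem i x, Finset.mem_filter]
      simp only [Finset.mem_univ, true_and]
    rw [Finset.sum_congr rfl (fun i _ => by rw [hOeq i]), swap_sum]
    apply Finset.sum_congr rfl
    intro x _
    rw [sum_w_between hv0 hmono (habs x) (hvMm x), sq_abs]
    -- core inequality per vertex
  have hcore : ∀ x, (max (min (-f x) (Ng x)) 0)^2 + (max (min (f x) (Pp x)) 0)^2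
      + max ((Mm x)^2 - (f x)^2) 0
      ≤ (∑ y ∈ nbr x, (f x + f y)^2) + 2 * |f x| * max (Mm x - |f x|) 0 := by
    intro x
    rw [hNgdef, hPpdef, hMmdef]
    exact core (hnbr x) f (f x)
  have hce : ∀ x, (max (Mm x - |f x|) 0)^2 ≤ ∑ y ∈ nbr x, (f x + f y)^2 := by
    intro x
    rw [hMmdef]
    exact core_e (hnbr x) f (f x)
  -- Cauchy-Schwarz
  have hesum : ∑ x, (max (Mm x - |f x|) 0)^2 ≤ Q := by
    rw [hQdef]
    exact Finset.sum_le_sum fun x _ => hce x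
  have hCS : ∑ x, |f x| * max (Mm x - |f x|) 0 ≤ Real.sqrt (2*(d:ℝ)*(1+r)) * S := by
    have h1 : (∑ x, |f x| * max (Mm x - |f x|) 0)^2 ≤ S * Q := by
      have h2 := Finset.sum_mul_sq_le_sq_mul_sq univ (fun x => |f x|)
        (fun x => max (Mm x - |f x|) 0)
      have h3 : ∑ x, |f x| ^ 2 = S := by
        rw [hSdef]
        exact Finset.sum_congr rfl fun x _ => sq_abs _
      calc (∑ x, |f x| * max (Mm x - |f x|) 0)^2
          ≤ (∑ x, |f x| ^ 2) * ∑ x, (max (Mm x - |f x|) 0)^2 := h2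
        _ ≤ S * Q := by
            rw [h3]
            exact mul_le_mul_of_nonneg_left hesum hS.le
    have h2 : 0 ≤ ∑ x, |f x| * max (Mm x - |f x|) 0 :=
      Finset.sum_nonneg fun x _ => mul_nonneg (abs_nonneg _) (le_max_right _ _)
    have h3 : ∑ x, |f x| * max (Mm x - |f x|) 0 ≤ Real.sqrt (S * Q) := by
      rw [show ∑ x, |f x| * max (Mm x - |f x|) 0
        = Real.sqrt ((∑ x, |f x| * max (Mm x - |f x|) 0)^2) from (Real.sqrt_sq h2).symm]
      exact Real.sqrt_le_sqrt h1
    have h4 : S * Q = (2*(d:ℝ)*(1+r)) * S^2 := by rw [hQ]; ring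
    rw [h4, Real.sqrt_mul (by positivity) (S^2), Real.sqrt_sq hS.le] at h3
    exact h3
  -- combine
  have hNsum : ∑ i ∈ range n, (v (i+1)^2 - v i^2) *
      ((II Adj (Lset i) : ℝ) + (II Adj (Rset i) : ℝ) + ((outBd Adj (Lset i ∪ Rset i)).card : ℝ))
      ≤ K * S := by
    have e1 : ∑ i ∈ range n, (v (i+1)^2 - v i^2) *
        ((II Adj (Lset i) : ℝ) + (II Adj (Rset i) : ℝ) + ((outBd Adj (Lset i ∪ Rset i)).card : ℝ))
        = (∑ i ∈ range n, (v (i+1)^2 - v i^2) * (II Adj (Lset i) : ℝ))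
          + (∑ i ∈ range n, (v (i+1)^2 - v i^2) * (II Adj (Rset i) : ℝ))
          + ∑ i ∈ range n, (v (i+1)^2 - v i^2) * ((outBd Adj (Lset i ∪ Rset i)).card : ℝ) := by
      rw [← Finset.sum_add_distrib, ← Finset.sum_add_distrib]
      apply Finset.sum_congr rfl
      intros
      ring
    rw [e1, hLsum, hRsum, hBsum, ← Finset.sum_add_distrib, ← Finset.sum_add_distrib]
    calc ∑ x, ((max (min (-f x) (Ng x)) 0)^2 + (max (min (f x) (Pp x)) 0)^2
          + max ((Mm x)^2 - (f x)^2) 0)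
        ≤ ∑ x, ((∑ y ∈ nbr x, (f x + f y)^2) + 2 * |f x| * max (Mm x - |f x|) 0) :=
          Finset.sum_le_sum fun x _ => hcore x
      _ = Q + 2 * ∑ x, |f x| * max (Mm x - |f x|) 0 := by
          rw [Finset.sum_add_distrib, hQdef, Finset.mul_sum]
          congr 1
          apply Finset.sum_congr rfl
          intros
          ring
      _ ≤ 2*(d:ℝ)*(1+r)*S + 2 * (Real.sqrt (2*(d:ℝ)*(1+r)) * S) := by
          rw [hQ] at *
          have := hCS
          linarith
      _ = K * S := by rw [hKdef]; ring
  have hDsum : ∑ i ∈ range n, (v (i+1)^2 - v i^2) * (((Lset i ∪ Rset i).card : ℝ)) = S := by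
    have e1 : ∀ i, (((Lset i ∪ Rset i).card : ℝ))
        = ((univ.filter fun x => v (i+1) ≤ |f x|).card : ℝ) := by
      intro i
      rw [hUfilt i]
    rw [Finset.sum_congr rfl (fun i _ => by rw [e1 i]), swap_sum]
    rw [hSdef]
    apply Finset.sum_congr rfl
    intro x _
    rw [sum_w_le hv0 hmono (Or.inr (habs x)), max_eq_left (abs_nonneg _), sq_abs]
  -- existence of a good threshold
  have hK0 : 0 ≤ K := by
    rw [hKdef]
    have : 0 ≤ Real.sqrt (2*(d:ℝ)*(1+r)) := Real.sqrt_nonneg _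
    nlinarith
  have hex : ∃ i, i ∈ range n ∧
      (II Adj (Lset i) : ℝ) + (II Adj (Rset i) : ℝ) + ((outBd Adj (Lset i ∪ Rset i)).card : ℝ)
        ≤ K * (((Lset i ∪ Rset i).card : ℝ)) := by
    by_contra hcon
    push_neg at hcon
    have hw : ∀ i ∈ range n, 0 < v (i+1)^2 - v i^2 := by
      intro i hi
      rw [Finset.mem_range] at hi
      have h1 : v i < v (i+1) := hmono i (i+1) (by omega) (by omega)
      have h2 : 0 ≤ v i := hv0 ▸ vmono_le hmono (Nat.zero_le i) (by omega)
      nlinarith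
    have hlt : ∑ i ∈ range n, (v (i+1)^2 - v i^2) * (K * (((Lset i ∪ Rset i).card : ℝ)))
        < ∑ i ∈ range n, (v (i+1)^2 - v i^2) *
          ((II Adj (Lset i) : ℝ) + (II Adj (Rset i) : ℝ)
            + ((outBd Adj (Lset i ∪ Rset i)).card : ℝ)) := by
      apply Finset.sum_lt_sum_of_nonempty ⟨0, Finset.mem_range.2 (by omega)⟩
      intro i hi
      exact (mul_lt_mul_iff_right₀ (hw i hi)).2 (hcon i hi)
    have he : ∑ i ∈ range n, (v (i+1)^2 - v i^2) * (K * (((Lset i ∪ Rset i).card : ℝ)))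
        = K * ∑ i ∈ range n, (v (i+1)^2 - v i^2) * (((Lset i ∪ Rset i).card : ℝ)) := by
      rw [Finset.mul_sum]
      apply Finset.sum_congr rfl
      intros
      ring
    rw [he, hDsum] at hlt
    linarith
  obtain ⟨i, hirange, hi⟩ := hex
  rw [Finset.mem_range] at hirange
  have hθpos : 0 < v (i+1) := by
    have := hmono 0 (i+1) (by omega) (by omega)
    rw [hv0] at this
    exact this
  have hdisj : Disjoint (Lset i) (Rset i) := by
    rw [Finset.disjoint_left]
    intro x hx1 hx2
    rw [hLdef] at hx1
    rw [hRdef] at hx2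
    simp only [Finset.mem_filter, Finset.mem_univ, true_and] at hx1 hx2
    linarith
  have hUne : (Lset i ∪ Rset i).Nonempty := by
    have hvT : v (i+1) ∈ T := (hrep _).2 ⟨i+1, by omega, by omega, rfl⟩
    rw [hTdef] at hvT
    obtain ⟨hmem, _⟩ := Finset.mem_filter.1 hvT
    obtain ⟨x, _, hx⟩ := Finset.mem_image.1 hmem
    refine ⟨x, ?_⟩
    rw [hUfilt i]
    exact Finset.mem_filter.2 ⟨Finset.mem_univ _, le_of_eq hx.symm⟩
  have hDpos : (0:ℝ) < (((Lset i ∪ Rset i).card : ℝ)) := by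
    have := Finset.card_pos.2 hUne
    exact_mod_cast this
  have hmemβ : ((II Adj (Lset i) : ℝ) + (II Adj (Rset i) : ℝ)
      + ((outBd Adj (Lset i ∪ Rset i)).card : ℝ)) / (((Lset i ∪ Rset i).card : ℝ))
      ∈ {z : ℝ | ∃ L R : Finset V, Disjoint L R ∧ (L ∪ R).Nonempty ∧
        z = ((II Adj L : ℝ) + (II Adj R : ℝ) + ((outBd Adj (L ∪ R)).card : ℝ)) /
          ((L ∪ R).card : ℝ)} := ⟨Lset i, Rset i, hdisj, hUne, rfl⟩
  have hbdd : BddBelow {z : ℝ | ∃ L R : Finset V, Disjoint L R ∧ (L ∪ R).Nonempty ∧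
      z = ((II Adj L : ℝ) + (II Adj R : ℝ) + ((outBd Adj (L ∪ R)).card : ℝ)) /
        ((L ∪ R).card : ℝ)} := by
    refine ⟨0, ?_⟩
    rintro z ⟨L, R, _, _, rfl⟩
    apply div_nonneg _ (Nat.cast_nonneg _)
    have h1 : (0:ℝ) ≤ (II Adj L : ℝ) := Nat.cast_nonneg _
    have h2 : (0:ℝ) ≤ (II Adj R : ℝ) := Nat.cast_nonneg _
    have h3 : (0:ℝ) ≤ ((outBd Adj (L ∪ R)).card : ℝ) := Nat.cast_nonneg _
    linarith
  have hble : betaOut Adj ≤ ((II Adj (Lset i) : ℝ) + (II Adj (Rset i) : ℝ)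
      + ((outBd Adj (Lset i ∪ Rset i)).card : ℝ)) / (((Lset i ∪ Rset i).card : ℝ)) := by
    rw [betaOut]
    exact csInf_le hbdd hmemβ
  have hratio : ((II Adj (Lset i) : ℝ) + (II Adj (Rset i) : ℝ)
      + ((outBd Adj (Lset i ∪ Rset i)).card : ℝ)) / (((Lset i ∪ Rset i).card : ℝ)) ≤ K := by
    rw [div_le_iff₀ hDpos]
    exact hi
  linarith

private lemma key_alg (β : ℝ) (hβ0 : 0 ≤ β) (d : ℕ) (r : ℝ)
    (hdR : (0:ℝ) < (d:ℝ)) (hlam : 0 ≤ 1 + r)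
    (hb : β ≤ 2*(d:ℝ)*(1+r) + 2*Real.sqrt (2*(d:ℝ)*(1+r))) :
    (Real.sqrt (1 + β) - 1)^2 / (2*(d:ℝ)) ≤ 1 + r := by
  set s := Real.sqrt (2*(d:ℝ)*(1+r)) with hs
  have hs0 : 0 ≤ s := Real.sqrt_nonneg _
  have hs2 : s^2 = 2*(d:ℝ)*(1+r) := Real.sq_sqrt (by positivity)
  have h1 : 1 + β ≤ (1+s)^2 := by nlinarith
  have h2 : Real.sqrt (1+β) ≤ 1 + s := by
    calc Real.sqrt (1+β) ≤ Real.sqrt ((1+s)^2) := Real.sqrt_le_sqrt h1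
      _ = 1 + s := Real.sqrt_sq (by linarith)
  have h3 : (1:ℝ) ≤ Real.sqrt (1+β) := by
    have := Real.sqrt_le_sqrt (show (1:ℝ) ≤ 1+β by linarith)
    rwa [Real.sqrt_one] at this
  have h4 : (Real.sqrt (1+β) - 1)^2 ≤ s^2 :=
    pow_le_pow_left₀ (by linarith) (by linarith) 2
  rw [div_le_iff₀ (by positivity)]
  nlinarith

/-- For a `d`-regular finite graph with smallest normalized adjacency eigenvalue `t₁`,
`1 + t₁ ≥ (√(1 + β_out) − 1)²/(2d)`. -/
theorem one_add_t1_ge_betaOut_bound {V : Type*} [Fintype V] [Nonempty V]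
    (Adj : V → V → Prop)
    (hsymm : ∀ x y : V, Adj x y → Adj y x) (d : ℕ)
    (hreg : ∀ x : V, (Finset.univ.filter fun y => Adj x y).card = d)
    (t1 : ℝ)
    (ht1 : t1 = sInf {r : ℝ | ∃ f : V → ℝ, f ≠ 0 ∧
      ((d : ℝ)⁻¹ • Matrix.of fun x y : V => if Adj x y then (1 : ℝ) else 0).mulVec f
        = r • f}) :
    1 + t1 ≥ (Real.sqrt (1 + betaOut Adj) - 1) ^ 2 / (2 * (d : ℝ)) := by
  classical
  rcases Nat.eq_zero_or_pos d with hd0 | hdpos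
  · subst hd0
    have hset : {r : ℝ | ∃ f : V → ℝ, f ≠ 0 ∧
        (((0:ℕ) : ℝ)⁻¹ • Matrix.of fun x y : V => if Adj x y then (1 : ℝ) else 0).mulVec f
          = r • f} = {(0:ℝ)} := by
      ext r
      simp only [Set.mem_setOf_eq, Set.mem_singleton_iff, Nat.cast_zero, inv_zero, zero_smul,
        Matrix.zero_mulVec]
      constructor
      · rintro ⟨f, hf0, hf⟩
        obtain ⟨x, hx⟩ : ∃ x, f x ≠ 0 := by
          by_contra h
          push_neg at h
          exact hf0 (funext h)
        have h2 := congrFun hf x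
        simp only [Pi.zero_apply, Pi.smul_apply, smul_eq_mul] at h2
        rcases mul_eq_zero.1 h2.symm with h | h
        · exact h
        · exact absurd h hx
      · rintro rfl
        refine ⟨fun _ => 1, ?_, by simp⟩
        intro h
        have := congrFun h (Classical.arbitrary V)
        simp at this
    rw [ht1, hset, csInf_singleton]
    have : ((0:ℕ):ℝ) = 0 := Nat.cast_zero
    rw [this]
    norm_num
  · have hd : 1 ≤ d := hdpos
    have hdR : (0:ℝ) < (d:ℝ) := by exact_mod_cast hdpos
    set A := ((d : ℝ)⁻¹ • Matrix.of fun x y : V => if Adj x y then (1 : ℝ) else 0)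
      with hA
    have hherm : A.IsHermitian := by
      rw [Matrix.IsHermitian]
      ext x y
      rw [Matrix.conjTranspose_apply]
      rw [hA]
      simp only [Matrix.smul_apply, Matrix.of_apply, smul_eq_mul, star_trivial]
      have hiff : Adj y x ↔ Adj x y := ⟨hsymm y x, hsymm x y⟩
      rw [if_congr hiff rfl rfl]
    set j0 : V := Classical.arbitrary V
    have heig := hherm.mulVec_eigenvectorBasis j0
    set f : V → ℝ := ⇑(hherm.eigenvectorBasis j0) with hfd
    have hf0 : f ≠ 0 := by
      intro h
      have h2 := (hherm.eigenvectorBasis.orthonormal).ne_zero j0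
      apply h2
      apply PiLp.ext
      intro x
      exact congrFun h x
    have hmem : hherm.eigenvalues j0 ∈ {r : ℝ | ∃ f : V → ℝ, f ≠ 0 ∧
        ((d : ℝ)⁻¹ • Matrix.of fun x y : V => if Adj x y then (1 : ℝ) else 0).mulVec f
          = r • f} := ⟨f, hf0, by rw [← hA]; exact heig⟩
    have hlb : ∀ z ∈ {r : ℝ | ∃ f : V → ℝ, f ≠ 0 ∧
        ((d : ℝ)⁻¹ • Matrix.of fun x y : V => if Adj x y then (1 : ℝ) else 0).mulVec f
          = r • f}, (Real.sqrt (1 + betaOut Adj) - 1) ^ 2 / (2 * (d : ℝ)) - 1 ≤ z := by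
      rintro z ⟨g, hg0, hg⟩
      obtain ⟨hlam, hb⟩ := beta_le Adj hsymm d hd hreg z g hg0 hg
      have hβ0 : 0 ≤ betaOut Adj := by
        rw [betaOut]
        apply Real.sInf_nonneg
        rintro w ⟨L, R, _, _, rfl⟩
        apply div_nonneg _ (Nat.cast_nonneg _)
        have h1 : (0:ℝ) ≤ (II Adj L : ℝ) := Nat.cast_nonneg _
        have h2 : (0:ℝ) ≤ (II Adj R : ℝ) := Nat.cast_nonneg _
        have h3 : (0:ℝ) ≤ ((outBd Adj (L ∪ R)).card : ℝ) := Nat.cast_nonneg _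
        linarith
      have := key_alg (betaOut Adj) hβ0 d z hdR hlam hb
      linarith
    have hsinf := le_csInf ⟨_, hmem⟩ hlb
    rw [ht1, ge_iff_le]
    linarith
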